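/- Let (Y, d_Y) be a compact geodesic metric space, M > 0, d_ℓ the induced length metric on X_M = Y × (0, M], and ω ∈ X_M a basepoint. Let x_i = (p_i, s_i) and y_i = (q_i, t_i) be sequences in X_M with s_i → 0, t_i → 0, p_i → a in Y and q_i → b in Y. Then (x_i, y_i)_ω → ∞ as i → ∞ if and only if a = b. -/
import Mathlib


open Set

/-- The Balogh–Schramm distance on `Y × (0, ∞)`:
`ρ((p,s),(q,t)) = 2·log((d_Y(p,q) + max(s,t))/√(s·t))`. -/
noncomputable def BS {Y : Type*} [MetricSpace Y] (x y : Y × ℝ) : ℝ :=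
  2 * Real.log ((dist x.1 y.1 + max x.2 y.2) / Real.sqrt (x.2 * y.2))

/-- Length of the map `γ` over the set `S` with respect to the distance
function `d`: the supremum over finite monotone partitions in `S` of the sums
of consecutive distances (as in Mathlib's `eVariationOn`). -/
noncomputable def lengthOn {X : Type*} (d : X → X → ℝ) (γ : ℝ → X) (S : Set ℝ) : ENNReal :=
  ⨆ p : ℕ × { u : ℕ → ℝ // Monotone u ∧ ∀ i, u i ∈ S },
    ∑ i ∈ Finset.range p.1, ENNReal.ofReal (d (γ (p.2.1 i)) (γ (p.2.1 (i + 1))))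

/-- Membership in `X_M = Y × (0, M]`. -/
def inXM {Y : Type*} (M : ℝ) (x : Y × ℝ) : Prop := 0 < x.2 ∧ x.2 ≤ M

/-- The induced length metric on `X_M = Y × (0, M]`: the infimum of
Balogh–Schramm lengths of continuous paths joining `x` and `y` inside `X_M`. -/
noncomputable def dLen {Y : Type*} [MetricSpace Y] (M : ℝ) (x y : Y × ℝ) : ℝ :=
  (sInf {L : ENNReal | ∃ (a b : ℝ) (γ : ℝ → Y × ℝ), a ≤ b ∧
      ContinuousOn γ (Icc a b) ∧ γ a = x ∧ γ b = y ∧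
      (∀ t ∈ Icc a b, inXM M (γ t)) ∧
      lengthOn (BS (Y := Y)) γ (Icc a b) = L}).toReal

/-- A metric space is geodesic: any two points are joined by an isometric
embedding of `[0, dist p q]`. -/
def GeodesicSpace (Y : Type*) [MetricSpace Y] : Prop :=
  ∀ p q : Y, ∃ α : ℝ → Y, α 0 = p ∧ α (dist p q) = q ∧
    ∀ s ∈ Icc (0:ℝ) (dist p q), ∀ t ∈ Icc (0:ℝ) (dist p q), dist (α s) (α t) = |s - t|

/-- The Gromov product `(x,y)_ω` with respect to the length metric `dLen M`. -/
noncomputable def gromovProd {Y : Type*} [MetricSpace Y] (M : ℝ) (ω x y : Y × ℝ) : ℝ :=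
  (dLen M x ω + dLen M y ω - dLen M x y) / 2


lemma BS_eq {Y : Type*} [MetricSpace Y] {x y : Y × ℝ} (hx : 0 < x.2) (hy : 0 < y.2) :
    BS x y = 2 * Real.log (dist x.1 y.1 + max x.2 y.2) - Real.log x.2 - Real.log y.2 := by
  have hmax : 0 < max x.2 y.2 := lt_max_iff.2 (Or.inl hx)
  have hnum : 0 < dist x.1 y.1 + max x.2 y.2 := by
    have := dist_nonneg (x := x.1) (y := y.1); linarith
  have hst : 0 < x.2 * y.2 := mul_pos hx hy
  have hsq : 0 < Real.sqrt (x.2 * y.2) := Real.sqrt_pos.2 hst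
  unfold BS
  rw [Real.log_div (ne_of_gt hnum) (ne_of_gt hsq), Real.log_sqrt hst.le,
    Real.log_mul (ne_of_gt hx) (ne_of_gt hy)]
  ring

lemma two_log_ge {s t d : ℝ} (hs : 0 < s) (ht : 0 < t) (hd : 0 ≤ d) :
    Real.log s + Real.log t ≤ 2 * Real.log (d + max s t) := by
  rcases le_total s t with h | h
  · have h1 : Real.log s ≤ Real.log t := Real.log_le_log hs h
    have h2 : Real.log t ≤ Real.log (d + max s t) := by
      apply Real.log_le_log ht; rw [max_eq_right h]; linarith
    linarith
  · have h1 : Real.log t ≤ Real.log s := Real.log_le_log ht h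
    have h2 : Real.log s ≤ Real.log (d + max s t) := by
      apply Real.log_le_log hs; rw [max_eq_left h]; linarith
    linarith

lemma BS_nonneg {Y : Type*} [MetricSpace Y] {x y : Y × ℝ} (hx : 0 < x.2) (hy : 0 < y.2) :
    0 ≤ BS x y := by
  rw [BS_eq hx hy]
  have := two_log_ge (d := dist x.1 y.1) hx hy dist_nonneg
  linarith

lemma le_lengthOn {X : Type*} (d : X → X → ℝ) (γ : ℝ → X) {a b : ℝ} (hab : a ≤ b) :
    ENNReal.ofReal (d (γ a) (γ b)) ≤ lengthOn d γ (Icc a b) := by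
  have hu : Monotone (fun i : ℕ => if i = 0 then a else b) := by
    intro i j hij
    dsimp only
    split_ifs with h1 h2
    · exact le_rfl
    · exact hab
    · omega
    · exact le_rfl
  have hmem : ∀ i : ℕ, (if i = 0 then a else b) ∈ Icc a b := by
    intro i; split_ifs
    · exact ⟨le_rfl, hab⟩
    · exact ⟨hab, le_rfl⟩
  have := le_iSup (fun p : ℕ × { u : ℕ → ℝ // Monotone u ∧ ∀ i, u i ∈ Icc a b } =>
      ∑ i ∈ Finset.range p.1, ENNReal.ofReal (d (γ (p.2.1 i)) (γ (p.2.1 (i + 1)))))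
    (⟨1, ⟨fun i => if i = 0 then a else b, hu, hmem⟩⟩ : ℕ × { u : ℕ → ℝ // Monotone u ∧ ∀ i, u i ∈ Icc a b })
  simpa [lengthOn] using this

lemma lengthOn_le_of_bound {X : Type*} (d : X → X → ℝ) (γ : ℝ → X) {a b : ℝ}
    (F : ℝ → ℝ) (hF : Monotone F)
    (hd : ∀ u v, u ∈ Icc a b → v ∈ Icc a b → u ≤ v → d (γ u) (γ v) ≤ F v - F u) :
    lengthOn d γ (Icc a b) ≤ ENNReal.ofReal (F b - F a) := by
  refine iSup_le ?_
  rintro ⟨n, u, hu, hmem⟩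
  calc ∑ i ∈ Finset.range n, ENNReal.ofReal (d (γ (u i)) (γ (u (i+1))))
      ≤ ∑ i ∈ Finset.range n, ENNReal.ofReal (F (u (i+1)) - F (u i)) :=
        Finset.sum_le_sum fun i _ => ENNReal.ofReal_le_ofReal
          (hd _ _ (hmem i) (hmem (i+1)) (hu (Nat.le_succ i)))
    _ = ENNReal.ofReal (∑ i ∈ Finset.range n, (F (u (i+1)) - F (u i))) := by
        rw [ENNReal.ofReal_sum_of_nonneg]
        exact fun i _ => sub_nonneg.2 (hF (hu (Nat.le_succ i)))
    _ = ENNReal.ofReal (F (u n) - F (u 0)) := by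
        rw [Finset.sum_range_sub (fun i => F (u i)) n]
    _ ≤ ENNReal.ofReal (F b - F a) := ENNReal.ofReal_le_ofReal
        (sub_le_sub (hF (hmem n).2) (hF (hmem 0).1))

lemma min3_eq1 {a b c : ℝ} (h1 : a ≤ b) (h2 : a ≤ c) : min a (min b c) = a :=
  min_eq_left (le_min h1 h2)

lemma min3_eq2 {a b c : ℝ} (h1 : b ≤ a) (h2 : b ≤ c) : min a (min b c) = b := by
  rw [min_eq_left h2, min_eq_right h1]

lemma min3_eq3 {a b c : ℝ} (h1 : c ≤ a) (h2 : c ≤ b) : min a (min b c) = c := by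
  rw [min_eq_right h2, min_eq_right h1]

lemma path_mem {Y : Type*} [MetricSpace Y] (hgeo : GeodesicSpace Y) {M : ℝ} (hM : 0 < M)
    (x y : Y × ℝ) (hx : inXM M x) (hy : inXM M y) {h : ℝ}
    (hxh : x.2 ≤ h) (hyh : y.2 ≤ h) (hhM : h ≤ M) :
    ∃ L : ENNReal, (∃ (a b : ℝ) (γ : ℝ → Y × ℝ), a ≤ b ∧
      ContinuousOn γ (Icc a b) ∧ γ a = x ∧ γ b = y ∧
      (∀ u ∈ Icc a b, inXM M (γ u)) ∧
      lengthOn (BS (Y := Y)) γ (Icc a b) = L) ∧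
      L ≤ ENNReal.ofReal (Real.log (h / x.2) + Real.log (h / y.2) + 2 * dist x.1 y.1 / h) := by
  obtain ⟨hs, hsM⟩ := hx
  obtain ⟨ht, htM⟩ := hy
  have hh : 0 < h := lt_of_lt_of_le hs hxh
  obtain ⟨α, hα0, hαd, hiso⟩ := hgeo x.1 y.1
  set d := dist x.1 y.1 with hdd
  have hd0 : 0 ≤ d := dist_nonneg
  set lgs := Real.log x.2 with hlgs
  set lgt := Real.log y.2 with hlgt
  set lgh := Real.log h with hlgh
  have hT1 : 0 ≤ lgh - lgs := sub_nonneg.2 (Real.log_le_log hs hxh)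
  have hT3 : 0 ≤ lgh - lgt := sub_nonneg.2 (Real.log_le_log ht hyh)
  set T1 := lgh - lgs with hT1d
  set T : ℝ := T1 + d + (lgh - lgt) with hTd
  have hT0 : (0:ℝ) ≤ T := by simp only [hTd]; linarith
  set c : ℝ → ℝ := fun u => max 0 (min (u - T1) d) with hcdef
  set G : ℝ → ℝ := fun u => min (lgs + u) (min lgh (lgt + (T - u))) with hGdef
  set γ : ℝ → Y × ℝ := fun u => (α (c u), Real.exp (G u)) with hγdef
  set F : ℝ → ℝ := fun u => u + (2 / h - 1) * c u with hFdef
  -- basic facts about c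
  have hc0 : c 0 = 0 := by
    simp only [hcdef]
    rw [max_eq_left]
    exact le_trans (min_le_left _ _) (by linarith)
  have hcT : c T = d := by
    simp only [hcdef]
    rw [show T - T1 = d + (lgh - lgt) by rw [hTd]; ring, min_eq_right (by linarith),
      max_eq_right hd0]
  have hcmem : ∀ u, c u ∈ Icc 0 d := fun u =>
    ⟨le_max_left _ _, max_le hd0 (min_le_right _ _)⟩
  have hcmono : Monotone c := by
    intro u v huv
    exact max_le_max le_rfl (min_le_min (by linarith) le_rfl)
  have hclip : ∀ u v : ℝ, u ≤ v → c v ≤ c u + (v - u) := by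
    intro u v huv
    have h1 : (0:ℝ) ≤ c u + (v - u) := by
      have := (hcmem u).1; linarith
    refine max_le h1 ?_
    have : min (v - T1) d ≤ min (u - T1) d + (v - u) := by
      rcases le_total (u - T1) d with h2 | h2
      · rw [min_eq_left h2]
        exact le_trans (min_le_left _ _) (by linarith)
      · rw [min_eq_right h2]
        exact le_trans (min_le_right _ _) (by linarith)
    exact le_trans this (by have := le_max_right (0:ℝ) (min (u - T1) d); linarith)
  -- basic facts about G
  have hGle : ∀ u, G u ≤ lgh := fun u =>
    le_trans (min_le_right _ _) (min_le_left _ _)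
  have hG0 : G 0 = lgs := by
    simp only [hGdef, add_zero, sub_zero]
    exact min3_eq1 (by linarith) (by linarith)
  have hGT : G T = lgt := by
    simp only [hGdef, sub_self, add_zero]
    exact min3_eq3 (by linarith) (by linarith)
  have hGlip1 : ∀ u v : ℝ, u ≤ v → G v ≤ G u + (v - u) := by
    intro u v huv
    have : G u + (v - u) = min (lgs + u + (v-u)) (min (lgh + (v-u)) (lgt + (T - u) + (v-u))) := by
      simp only [hGdef]
      rw [min_add_add_right, min_add_add_right]
    rw [this]
    refine le_min ?_ (le_min ?_ ?_)
    · exact le_trans (min_le_left _ _) (by linarith)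
    · exact le_trans (hGle v) (by linarith)
    · refine le_trans (le_trans (min_le_right _ _) (min_le_right _ _)) (by linarith)
  have hGlip2 : ∀ u v : ℝ, u ≤ v → G u ≤ G v + (v - u) := by
    intro u v huv
    have : G v + (v - u) = min (lgs + v + (v-u)) (min (lgh + (v-u)) (lgt + (T - v) + (v-u))) := by
      simp only [hGdef]
      rw [min_add_add_right, min_add_add_right]
    rw [this]
    refine le_min ?_ (le_min ?_ ?_)
    · exact le_trans (min_le_left _ _) (by linarith)
    · exact le_trans (hGle u) (by linarith)
    · refine le_trans (le_trans (min_le_right _ _) (min_le_right _ _)) (by linarith)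
  -- piecewise identities
  have hQ1 : ∀ u : ℝ, 0 ≤ u → u ≤ T1 + d → G u = lgs + u - c u := by
    intro u hu0 hud
    rcases le_total u T1 with h1 | h1
    · have hcu : c u = 0 := by
        simp only [hcdef]
        rw [max_eq_left]
        exact le_trans (min_le_left _ _) (by linarith)
      have hGu : G u = lgs + u := by
        simp only [hGdef]
        exact min3_eq1 (by linarith) (by linarith)
      rw [hGu, hcu]; ring
    · have hcu : c u = u - T1 := by
        simp only [hcdef]
        rw [min_eq_left (by linarith), max_eq_right (by linarith)]
      have hGu : G u = lgh := by
        simp only [hGdef]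
        exact min3_eq2 (by linarith) (by linarith)
      rw [hGu, hcu, hT1d]; ring
  have hQ2 : ∀ v : ℝ, T1 ≤ v → v ≤ T → G v = lgh - (v - c v) + T1 := by
    intro v hv1 hvT
    rcases le_total v (T1 + d) with h1 | h1
    · have hcv : c v = v - T1 := by
        simp only [hcdef]
        rw [min_eq_left (by linarith), max_eq_right (by linarith)]
      have hGv : G v = lgh := by
        simp only [hGdef]
        exact min3_eq2 (by linarith) (by linarith)
      rw [hGv, hcv]; ring
    · have hcv : c v = d := by
        simp only [hcdef]
        rw [min_eq_right (by linarith), max_eq_right hd0]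
      have hGv : G v = lgt + (T - v) := by
        simp only [hGdef]
        exact min3_eq3 (by linarith) (by linarith)
      rw [hGv, hcv, hTd, hT1d]; ring
  -- monotonicity of F
  have hFmono : Monotone F := by
    intro u v huv
    have h1 := hclip u v huv
    have h2 : c u ≤ c v := hcmono huv
    have h3 : 0 < 2 / h := by positivity
    simp only [hFdef]
    nlinarith
  -- key estimate
  have hkey : ∀ u v, u ∈ Icc (0:ℝ) T → v ∈ Icc (0:ℝ) T → u ≤ v →
      BS (γ u) (γ v) ≤ F v - F u := by
    intro u v hu hv huv
    have hγu2 : (0:ℝ) < (γ u).2 := Real.exp_pos _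
    have hγv2 : (0:ℝ) < (γ v).2 := Real.exp_pos _
    have hdist : dist (γ u).1 (γ v).1 = c v - c u := by
      simp only [hγdef]
      rw [hiso _ (hcmem u) _ (hcmem v), abs_of_nonpos (by have := hcmono huv; linarith)]
      ring
    have hmax : max (γ u).2 (γ v).2 = Real.exp (max (G u) (G v)) := by
      simp only [hγdef]
      exact (Real.exp_monotone.map_max).symm
    rw [BS_eq hγu2 hγv2, hdist, hmax]
    simp only [hγdef, Real.log_exp]
    have hΔ0 : 0 ≤ c v - c u := by have := hcmono huv; linarith
    rcases eq_or_lt_of_le hΔ0 with hΔ | hΔ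
    · -- no horizontal motion
      rw [← hΔ, zero_add, Real.log_exp]
      have hFvu : F v - F u = v - u := by
        simp only [hFdef]
        have : c v = c u := by linarith
        rw [this]; ring
      rw [hFvu]
      rcases le_total (G u) (G v) with h1 | h1
      · rw [max_eq_right h1]
        have := hGlip1 u v huv; linarith
      · rw [max_eq_left h1]
        have := hGlip2 u v huv; linarith
    · -- horizontal motion
      have hcu_lt : u ≤ T1 + d := by
        by_contra hcon
        push_neg at hcon
        have he1 : c u = d := by
          simp only [hcdef]
          rw [min_eq_right (by linarith), max_eq_right hd0]
        have he2 := (hcmem v).2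
        linarith
      have hv_gt : T1 ≤ v := by
        by_contra hcon
        push_neg at hcon
        have he1 : c v = 0 := by
          simp only [hcdef]
          rw [max_eq_left]
          exact le_trans (min_le_left _ _) (by linarith)
        have he2 := (hcmem u).1
        linarith
      have hGu := hQ1 u hu.1 hcu_lt
      have hGv := hQ2 v hv_gt hv.2
      have hexpm : Real.exp (max (G u) (G v)) ≤ h := by
        calc Real.exp (max (G u) (G v)) ≤ Real.exp lgh :=
              Real.exp_le_exp.2 (max_le (hGle u) (hGle v))
          _ = h := Real.exp_log hh
      have hpos1 : 0 < c v - c u + Real.exp (max (G u) (G v)) := by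
        have := Real.exp_pos (max (G u) (G v)); linarith
      have hlog1 : Real.log (c v - c u + Real.exp (max (G u) (G v))) ≤
          Real.log (c v - c u + h) := Real.log_le_log hpos1 (by linarith)
      have hlog2 : Real.log (c v - c u + h) = lgh + Real.log (1 + (c v - c u)/h) := by
        rw [hlgh, ← Real.log_mul (ne_of_gt hh) (by positivity)]
        congr 1
        field_simp
        ring
      have hlog3 : Real.log (1 + (c v - c u)/h) ≤ (c v - c u)/h := by
        have := Real.log_le_sub_one_of_pos (x := 1 + (c v - c u)/h) (by positivity)
        linarith
    -- combine
      have hcomb : 2 * Real.log (c v - c u + Real.exp (max (G u) (G v))) - G u - G v ≤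
          2 * lgh + 2 * ((c v - c u)/h) - G u - G v := by linarith
      refine le_trans hcomb (le_of_eq ?_)
      rw [hGu, hGv]
      simp only [hFdef]
      rw [hT1d]
      ring
  -- continuity
  have hαlip : LipschitzOnWith 1 α (Icc 0 d) := by
    apply LipschitzOnWith.of_dist_le_mul
    intro z hz w hw
    rw [hiso z hz w hw, NNReal.coe_one, one_mul, Real.dist_eq]
  have hccont : Continuous c := by
    simp only [hcdef]
    fun_prop
  have hGcont : Continuous G := by
    simp only [hGdef]
    fun_prop
  have hγcont : ContinuousOn γ (Icc 0 T) := by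
    simp only [hγdef]
    refine ContinuousOn.prodMk ?_ ?_
    · exact hαlip.continuousOn.comp hccont.continuousOn (fun u _ => hcmem u)
    · exact (Real.continuous_exp.comp hGcont).continuousOn
  -- endpoints
  have hγ0 : γ 0 = x := by
    simp only [hγdef]
    rw [hc0, hG0, hα0, hlgs, Real.exp_log hs]
  have hγT : γ T = y := by
    simp only [hγdef]
    rw [hcT, hGT, hαd, hlgt, Real.exp_log ht]
  have hγmem : ∀ u ∈ Icc (0:ℝ) T, inXM M (γ u) := by
    intro u _
    refine ⟨Real.exp_pos _, ?_⟩
    calc Real.exp (G u) ≤ Real.exp lgh := Real.exp_le_exp.2 (hGle u)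
      _ = h := Real.exp_log hh
      _ ≤ M := hhM
  refine ⟨lengthOn (BS (Y := Y)) γ (Icc 0 T), ⟨0, T, γ, hT0, hγcont, hγ0, hγT, hγmem, rfl⟩, ?_⟩
  have hb := lengthOn_le_of_bound (BS (Y := Y)) γ F hFmono hkey
  refine le_trans hb (ENNReal.ofReal_le_ofReal (le_of_eq ?_))
  simp only [hFdef]
  rw [hcT, hc0, hTd, hT1d, hlgs, hlgt, hlgh,
    Real.log_div (ne_of_gt hh) (ne_of_gt hs), Real.log_div (ne_of_gt hh) (ne_of_gt ht)]
  ring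

lemma dLen_le {Y : Type*} [MetricSpace Y] (hgeo : GeodesicSpace Y) {M : ℝ} (hM : 0 < M)
    (x y : Y × ℝ) (hx : inXM M x) (hy : inXM M y) {h : ℝ}
    (hxh : x.2 ≤ h) (hyh : y.2 ≤ h) (hhM : h ≤ M) :
    dLen M x y ≤ Real.log (h / x.2) + Real.log (h / y.2) + 2 * dist x.1 y.1 / h := by
  obtain ⟨L, hLmem, hLle⟩ := path_mem hgeo hM x y hx hy hxh hyh hhM
  have hh : 0 < h := lt_of_lt_of_le hx.1 hxh
  have hB : 0 ≤ Real.log (h / x.2) + Real.log (h / y.2) + 2 * dist x.1 y.1 / h := by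
    have h1 : 0 ≤ Real.log (h / x.2) := Real.log_nonneg ((one_le_div hx.1).2 hxh)
    have h2 : 0 ≤ Real.log (h / y.2) := Real.log_nonneg ((one_le_div hy.1).2 hyh)
    have h3 : 0 ≤ 2 * dist x.1 y.1 / h := by positivity
    linarith
  have h1 : sInf {L : ENNReal | ∃ (a b : ℝ) (γ : ℝ → Y × ℝ), a ≤ b ∧
      ContinuousOn γ (Icc a b) ∧ γ a = x ∧ γ b = y ∧
      (∀ t ∈ Icc a b, inXM M (γ t)) ∧
      lengthOn (BS (Y := Y)) γ (Icc a b) = L} ≤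
      ENNReal.ofReal (Real.log (h / x.2) + Real.log (h / y.2) + 2 * dist x.1 y.1 / h) :=
    le_trans (sInf_le hLmem) hLle
  calc dLen M x y ≤ (ENNReal.ofReal (Real.log (h / x.2) + Real.log (h / y.2) +
        2 * dist x.1 y.1 / h)).toReal := ENNReal.toReal_mono ENNReal.ofReal_ne_top h1
    _ = _ := ENNReal.toReal_ofReal hB

lemma BS_le_dLen {Y : Type*} [MetricSpace Y] (hgeo : GeodesicSpace Y) {M : ℝ} (hM : 0 < M)
    (x y : Y × ℝ) (hx : inXM M x) (hy : inXM M y) :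
    BS x y ≤ dLen M x y := by
  obtain ⟨L0, hL0mem, hL0le⟩ := path_mem hgeo hM x y hx hy (h := M) hx.2 hy.2 le_rfl
  set S := {L : ENNReal | ∃ (a b : ℝ) (γ : ℝ → Y × ℝ), a ≤ b ∧
      ContinuousOn γ (Icc a b) ∧ γ a = x ∧ γ b = y ∧
      (∀ t ∈ Icc a b, inXM M (γ t)) ∧
      lengthOn (BS (Y := Y)) γ (Icc a b) = L} with hSdef
  have hlow : ENNReal.ofReal (BS x y) ≤ sInf S := by
    refine le_sInf ?_
    rintro L ⟨a, b, γ, hab, _, ha, hb, _, hlen⟩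
    rw [← hlen]
    have := le_lengthOn (BS (Y := Y)) γ hab
    rwa [ha, hb] at this
  have hfin : sInf S ≠ ⊤ :=
    ne_top_of_le_ne_top ENNReal.ofReal_ne_top (le_trans (sInf_le hL0mem) hL0le)
  calc BS x y = (ENNReal.ofReal (BS x y)).toReal :=
        (ENNReal.toReal_ofReal (BS_nonneg hx.1 hy.1)).symm
    _ ≤ (sInf S).toReal := ENNReal.toReal_mono hfin hlow
    _ = dLen M x y := rfl

/-- for sequences `x_i = (p_i, s_i)`, `y_i = (q_i, t_i)` in `X_M`
with heights tending to `0` and `p_i → a`, `q_i → b`, the Gromov products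
`(x_i, y_i)_ω` tend to `∞` iff `a = b`. -/
theorem stmt7 {Y : Type*} [MetricSpace Y] [CompactSpace Y] (hgeo : GeodesicSpace Y)
    {M : ℝ} (hM : 0 < M) (ω : Y × ℝ) (hω : inXM M ω)
    (p q : ℕ → Y) (s t : ℕ → ℝ)
    (hxmem : ∀ i, inXM M (p i, s i)) (hymem : ∀ i, inXM M (q i, t i))
    (a b : Y)
    (hs : Filter.Tendsto s Filter.atTop (nhds 0))
    (ht : Filter.Tendsto t Filter.atTop (nhds 0))
    (hp : Filter.Tendsto p Filter.atTop (nhds a))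
    (hq : Filter.Tendsto q Filter.atTop (nhds b)) :
    Filter.Tendsto (fun i => gromovProd M ω (p i, s i) (q i, t i))
        Filter.atTop Filter.atTop ↔ a = b := by
  have hw : 0 < ω.2 := hω.1
  have hwM : ω.2 ≤ M := hω.2
  constructor
  · -- tendsto → a = b
    intro htend
    by_contra hne
    have hD : 0 < dist a b := dist_pos.2 hne
    set Dm := Metric.diam (univ : Set Y) with hDm
    have hdiam : ∀ z z' : Y, dist z z' ≤ Dm := fun z z' =>
      Metric.dist_le_diam_of_mem isCompact_univ.isBounded (mem_univ _) (mem_univ _)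
    set B : ℝ := 2 * Real.log M - Real.log ω.2 + 2 * Dm / M - Real.log (dist a b / 2) with hB
    have hev1 : ∀ᶠ i in Filter.atTop, dist a b / 2 < dist (p i) (q i) :=
      (hp.dist hq).eventually (eventually_gt_nhds (by linarith))
    have hev2 := htend.eventually_gt_atTop B
    obtain ⟨i, h1, h2⟩ := (hev1.and hev2).exists
    -- now derive a contradiction
    have hsi : 0 < s i := (hxmem i).1
    have hti : 0 < t i := (hymem i).1
    have hsiM : s i ≤ M := (hxmem i).2
    have htiM : t i ≤ M := (hymem i).2
    have hdipos : 0 < dist (p i) (q i) := lt_trans (by positivity) h1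
    have e1 : dLen M (p i, s i) ω ≤
        Real.log M - Real.log (s i) + (Real.log M - Real.log ω.2) + 2 * Dm / M := by
      have hle := dLen_le hgeo hM (p i, s i) ω (hxmem i) hω (h := M) hsiM hwM le_rfl
      have h3 : 2 * dist (p i, s i).1 ω.1 / M ≤ 2 * Dm / M := by
        gcongr
        exact hdiam _ _
      rw [Real.log_div (ne_of_gt hM) (ne_of_gt hsi), Real.log_div (ne_of_gt hM) (ne_of_gt hw)]
        at hle
      linarith
    have e2 : dLen M (q i, t i) ω ≤
        Real.log M - Real.log (t i) + (Real.log M - Real.log ω.2) + 2 * Dm / M := by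
      have hle := dLen_le hgeo hM (q i, t i) ω (hymem i) hω (h := M) htiM hwM le_rfl
      have h3 : 2 * dist (q i, t i).1 ω.1 / M ≤ 2 * Dm / M := by
        gcongr
        exact hdiam _ _
      rw [Real.log_div (ne_of_gt hM) (ne_of_gt hti), Real.log_div (ne_of_gt hM) (ne_of_gt hw)]
        at hle
      linarith
    have e3 : Real.log (dist a b / 2) + Real.log (dist a b / 2) - Real.log (s i) -
        Real.log (t i) ≤ dLen M (p i, s i) (q i, t i) := by
      have hbs := BS_le_dLen hgeo hM (p i, s i) (q i, t i) (hxmem i) (hymem i)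
      rw [BS_eq (x := ((p i, s i) : Y × ℝ)) (y := ((q i, t i) : Y × ℝ)) hsi hti] at hbs
      have h4 : Real.log (dist a b / 2) ≤
          Real.log (dist (p i, s i).1 (q i, t i).1 + max (p i, s i).2 (q i, t i).2) := by
        apply Real.log_le_log (by positivity)
        have hmx : (0:ℝ) ≤ max (s i) (t i) := le_max_of_le_left hsi.le
        simp only []
        linarith [h1, hmx]
      linarith
    have hgp : gromovProd M ω (p i, s i) (q i, t i) ≤ B := by
      unfold gromovProd
      rw [hB]
      linarith
    linarith
  · -- a = b → tendsto
    intro hab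
    rw [Filter.tendsto_atTop]
    intro C
    set w := ω.2 with hwdef
    set ε : ℝ := min M (Real.exp (Real.log w - 1 - C)) with hε
    have hεpos : 0 < ε := lt_min hM (Real.exp_pos _)
    have hd0 : Filter.Tendsto (fun i => dist (p i) (q i)) Filter.atTop (nhds 0) := by
      have := hp.dist hq
      rwa [hab, dist_self] at this
    have evs : ∀ᶠ i in Filter.atTop, s i < ε := hs.eventually (eventually_lt_nhds hεpos)
    have evt : ∀ᶠ i in Filter.atTop, t i < ε := ht.eventually (eventually_lt_nhds hεpos)
    have evd : ∀ᶠ i in Filter.atTop, dist (p i) (q i) < ε :=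
      hd0.eventually (eventually_lt_nhds hεpos)
    filter_upwards [evs, evt, evd] with i h1 h2 h3
    have hsi : 0 < s i := (hxmem i).1
    have hti : 0 < t i := (hymem i).1
    set hg : ℝ := max (dist (p i) (q i)) (max (s i) (t i)) with hgdef
    have hgpos : 0 < hg := lt_of_lt_of_le hsi (le_trans (le_max_left _ _) (le_max_right _ _))
    have hgε : hg ≤ ε := max_le h3.le (max_le h1.le h2.le)
    have hgM : hg ≤ M := le_trans hgε (min_le_left _ _)
    have hshg : s i ≤ hg := le_trans (le_max_left _ _) (le_max_right _ _)
    have hthg : t i ≤ hg := le_trans (le_max_right _ _) (le_max_right _ _)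
    have hdhg : dist (p i) (q i) ≤ hg := le_max_left _ _
    -- upper bound on dLen x y
    have U : dLen M (p i, s i) (q i, t i) ≤
        Real.log hg - Real.log (s i) + (Real.log hg - Real.log (t i)) + 2 := by
      have hle := dLen_le hgeo hM (p i, s i) (q i, t i) (hxmem i) (hymem i)
        (h := hg) hshg hthg hgM
      rw [Real.log_div (ne_of_gt hgpos) (ne_of_gt hsi),
        Real.log_div (ne_of_gt hgpos) (ne_of_gt hti)] at hle
      have h4 : 2 * dist (p i, s i).1 (q i, t i).1 / hg ≤ 2 := by
        rw [div_le_iff₀ hgpos]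
        simp only []
        linarith
      linarith
    -- lower bounds on dLen x ω and y ω
    have L1 : Real.log w - Real.log (s i) ≤ dLen M (p i, s i) ω := by
      have hbs := BS_le_dLen hgeo hM (p i, s i) ω (hxmem i) hω
      rw [BS_eq (x := ((p i, s i) : Y × ℝ)) hsi hw] at hbs
      have h4 : Real.log w ≤ Real.log (dist (p i, s i).1 ω.1 + max (p i, s i).2 ω.2) := by
        apply Real.log_le_log hw
        have := dist_nonneg (x := (p i)) (y := ω.1)
        have hmx : w ≤ max (s i) w := le_max_right _ _
        simp only []
        linarith
      linarith
    have L2 : Real.log w - Real.log (t i) ≤ dLen M (q i, t i) ω := by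
      have hbs := BS_le_dLen hgeo hM (q i, t i) ω (hymem i) hω
      rw [BS_eq (x := ((q i, t i) : Y × ℝ)) hti hw] at hbs
      have h4 : Real.log w ≤ Real.log (dist (q i, t i).1 ω.1 + max (q i, t i).2 ω.2) := by
        apply Real.log_le_log hw
        have := dist_nonneg (x := (q i)) (y := ω.1)
        have hmx : w ≤ max (t i) w := le_max_right _ _
        simp only []
        linarith
      linarith
    have hlog : Real.log hg ≤ Real.log w - 1 - C := by
      calc Real.log hg ≤ Real.log ε := Real.log_le_log hgpos hgε
        _ ≤ Real.log (Real.exp (Real.log w - 1 - C)) :=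
          Real.log_le_log hεpos (min_le_right _ _)
        _ = Real.log w - 1 - C := Real.log_exp _
    unfold gromovProd
    linarith
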